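/- Let L be a finite-dimensional Lie algebra over the complex numbers of dimension n + 1 with n ≥ 2, such that the derived algebra D(L) = [L, L] is one-dimensional and satisfies [L, D(L)] = D(L). Then L has a basis {x, y, z_1, …, z_{n−1}} such that [x, y] = y and all other brackets of pairs of basis elements are zero; in particular L is the direct sum of the two-dimensional nonabelian solvable Lie algebra Span{x, y} and the n − 1 one-dimensional abelian subalgebras Span{z_j}. -/

import Mathlib

open Module LinearMap

/-- An A(n)-A(1) algebra with `n ≥ 2` (a complex Lie algebra of dimension `n+1`
whose derived algebra `D(L) = [L,L]` is one-dimensional and satisfies `[L, D(L)] = D(L)`)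
has a basis `{x, y, z_1, …, z_{n-1}}` with `[x, y] = y` and all other brackets of pairs of
basis elements zero; in particular it is the direct sum of the two-dimensional nonabelian
solvable algebra `Span{x, y}` and `n - 1` one-dimensional abelian algebras. -/
theorem anA1_structure
    (n : ℕ) (hn : 2 ≤ n)
    (L : Type*) [LieRing L] [LieAlgebra ℂ L] [FiniteDimensional ℂ L]
    (hdim : Module.finrank ℂ L = n + 1)
    (hD : Module.finrank ℂ ↥(⁅(⊤ : LieIdeal ℂ L), (⊤ : LieIdeal ℂ L)⁆ : LieIdeal ℂ L) = 1)
    (hnp : ⁅(⊤ : LieIdeal ℂ L), (⁅(⊤ : LieIdeal ℂ L), (⊤ : LieIdeal ℂ L)⁆ : LieIdeal ℂ L)⁆ =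
      ⁅(⊤ : LieIdeal ℂ L), (⊤ : LieIdeal ℂ L)⁆) :
    ∃ b : Basis (Fin (n + 1)) ℂ L,
      ⁅b 0, b 1⁆ = b 1 ∧
      ∀ i j : Fin (n + 1), ¬(i = 0 ∧ j = 1) → ¬(i = 1 ∧ j = 0) → ⁅b i, b j⁆ = 0 := by
  obtain ⟨m, rfl⟩ : ∃ m, n = m + 2 := ⟨n - 2, by omega⟩
  set D : LieIdeal ℂ L := ⁅(⊤ : LieIdeal ℂ L), (⊤ : LieIdeal ℂ L)⁆ with hDdef
  have hD1 := hD
  rw [finrank_eq_one_iff'] at hD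
  obtain ⟨y₀, hy₀ne, hy₀⟩ := hD
  set y : L := (y₀ : L) with hydef
  have hyne : y ≠ 0 := fun h => hy₀ne (Subtype.ext h)
  have hinj : Function.Injective fun c : ℂ => c • y := smul_left_injective ℂ hyne
  have hmemD : ∀ a b : L, ⁅a, b⁆ ∈ D := fun a b =>
    LieSubmodule.lie_mem_lie (LieSubmodule.mem_top _) (LieSubmodule.mem_top _)
  have hB : ∀ a b : L, ∃ c : ℂ, ⁅a, b⁆ = c • y := by
    intro a b
    obtain ⟨c, hc⟩ := hy₀ ⟨⁅a, b⁆, hmemD a b⟩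
    exact ⟨c, by simpa using congrArg Subtype.val hc.symm⟩
  choose Bc hBc using hB
  -- existence of x with ⁅x, y⁆ = y
  have hφx : ∃ a : L, Bc a y ≠ 0 := by
    by_contra h
    push_neg at h
    have hbot : ⁅(⊤ : LieIdeal ℂ L), D⁆ = ⊥ := by
      rw [LieSubmodule.lie_eq_bot_iff]
      intro a _ d hd
      obtain ⟨c, hc⟩ := hy₀ ⟨d, hd⟩
      have hdc : d = c • y := by simpa using congrArg Subtype.val hc.symm
      rw [hdc, lie_smul, hBc a y, h a, zero_smul, smul_zero]
    rw [hnp] at hbot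
    have hmem : y₀.1 ∈ (⊥ : LieIdeal ℂ L) := hbot ▸ y₀.2
    rw [LieSubmodule.mem_bot] at hmem
    exact hyne hmem
  obtain ⟨x₀, hx₀⟩ := hφx
  obtain ⟨x, hxy⟩ : ∃ x : L, ⁅x, y⁆ = y :=
    ⟨(Bc x₀ y)⁻¹ • x₀, by
      rw [smul_lie, hBc x₀ y, smul_smul, inv_mul_cancel₀ hx₀, one_smul]⟩
  -- basic values
  have hφy : Bc y y = 0 := hinj (by
    show Bc y y • y = (0 : ℂ) • y
    rw [← hBc, lie_self, zero_smul])
  have hψy : Bc x y = 1 := hinj (by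
    show Bc x y • y = (1 : ℂ) • y
    rw [← hBc, hxy, one_smul])
  have hψx : Bc x x = 0 := hinj (by
    show Bc x x • y = (0 : ℂ) • y
    rw [← hBc, lie_self, zero_smul])
  -- linear functionals
  have φadd : ∀ a b : L, Bc (a + b) y = Bc a y + Bc b y := fun a b => hinj (by
    show Bc (a + b) y • y = (Bc a y + Bc b y) • y
    rw [← hBc, add_lie, hBc, hBc, add_smul])
  have φsmul : ∀ (c : ℂ) (a : L), Bc (c • a) y = c * Bc a y := fun c a => hinj (by
    show Bc (c • a) y • y = (c * Bc a y) • y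
    rw [← hBc, smul_lie, hBc, smul_smul])
  have ψadd : ∀ a b : L, Bc x (a + b) = Bc x a + Bc x b := fun a b => hinj (by
    show Bc x (a + b) • y = (Bc x a + Bc x b) • y
    rw [← hBc, lie_add, hBc, hBc, add_smul])
  have ψsmul : ∀ (c : ℂ) (a : L), Bc x (c • a) = c * Bc x a := fun c a => hinj (by
    show Bc x (c • a) • y = (c * Bc x a) • y
    rw [← hBc, lie_smul, hBc, smul_smul])
  let φ : L →ₗ[ℂ] ℂ := { toFun := fun a => Bc a y, map_add' := φadd, map_smul' := φsmul }
  let ψ : L →ₗ[ℂ] ℂ := { toFun := fun a => Bc x a, map_add' := ψadd, map_smul' := ψsmul }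
  let Ψ : L →ₗ[ℂ] ℂ × ℂ := φ.prod ψ
  have hΨapp : ∀ a : L, Ψ a = (Bc a y, Bc x a) := fun a => rfl
  have hsurj : Function.Surjective Ψ := by
    intro p
    refine ⟨p.1 • x + p.2 • y, ?_⟩
    rw [hΨapp]
    have h1 : Bc (p.1 • x + p.2 • y) y = p.1 := by
      rw [φadd, φsmul, φsmul, hψy, hφy]; ring
    have h2 : Bc x (p.1 • x + p.2 • y) = p.2 := by
      rw [ψadd, ψsmul, ψsmul, hψx, hψy]; ring
    rw [h1, h2]
  -- kernel dimension
  have hrank := Ψ.finrank_range_add_finrank_ker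
  rw [LinearMap.range_eq_top.mpr hsurj] at hrank
  have hker : finrank ℂ ↥(LinearMap.ker Ψ) = m + 1 := by
    rw [finrank_top] at hrank
    have h2 : finrank ℂ (ℂ × ℂ) = 2 := by simp
    rw [h2, hdim] at hrank
    omega
  let wb : Basis (Fin (m + 1)) ℂ ↥(LinearMap.ker Ψ) :=
    (Module.finBasis ℂ ↥(LinearMap.ker Ψ)).reindex (finCongr hker)
  have hkerp : ∀ z : L, z ∈ LinearMap.ker Ψ → Bc z y = 0 ∧ Bc x z = 0 := by
    intro z hz
    rw [LinearMap.mem_ker, hΨapp, Prod.ext_iff] at hz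
    exact hz
  -- bracket facts for kernel elements
  have hxw : ∀ z ∈ LinearMap.ker Ψ, ⁅x, z⁆ = 0 := by
    intro z hz; rw [hBc, (hkerp z hz).2, zero_smul]
  have hwy : ∀ z ∈ LinearMap.ker Ψ, ⁅z, y⁆ = 0 := by
    intro z hz; rw [hBc, (hkerp z hz).1, zero_smul]
  have hww : ∀ z ∈ LinearMap.ker Ψ, ∀ z' ∈ LinearMap.ker Ψ, ⁅z, z'⁆ = 0 := by
    intro z hz z' hz'
    have h1 : ⁅x, ⁅z, z'⁆⁆ = Bc z z' • y := by rw [hBc z z', lie_smul, hxy]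
    have h2 : ⁅x, ⁅z, z'⁆⁆ = 0 := by
      rw [leibniz_lie, hxw z hz, hxw z' hz', zero_lie, lie_zero, add_zero]
    have h3 : Bc z z' = 0 := by
      rw [h1] at h2
      rcases smul_eq_zero.mp h2 with h | h
      · exact h
      · exact absurd h hyne
    rw [hBc z z', h3, zero_smul]
  -- the candidate basis family
  let w : Fin (m + 1) → L := fun i => (wb i : L)
  have hwmem : ∀ i, w i ∈ LinearMap.ker Ψ := fun i => (wb i).2
  let v : Fin (m + 3) → L := Fin.cons x (Fin.cons y w)
  have hv0 : v 0 = x := rfl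
  have hv1 : v 1 = y := by
    have h1 : (1 : Fin (m + 3)) = Fin.succ 0 := (Fin.succ_zero_eq_one).symm
    show (Fin.cons x (Fin.cons y w) : Fin (m + 3) → L) 1 = y
    rw [h1, Fin.cons_succ, Fin.cons_zero]
  have hv2 : ∀ i : Fin (m + 3), 2 ≤ (i : ℕ) → v i ∈ LinearMap.ker Ψ := by
    intro i hi
    have hlt : (i : ℕ) - 2 < m + 1 := by omega
    have : i = Fin.succ (Fin.succ ⟨(i : ℕ) - 2, hlt⟩) := by
      apply Fin.ext
      simp [Fin.val_succ]
      omega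
    rw [this]
    show (Fin.cons x (Fin.cons y w) : Fin (m + 3) → L)
      (Fin.succ (Fin.succ ⟨(i : ℕ) - 2, hlt⟩)) ∈ LinearMap.ker Ψ
    rw [Fin.cons_succ, Fin.cons_succ]
    exact hwmem _
  -- linear independence
  have hwli : LinearIndependent ℂ w :=
    wb.linearIndependent.map' (LinearMap.ker Ψ).subtype (Submodule.ker_subtype _)
  have hspanw : Submodule.span ℂ (Set.range w) ≤ (LinearMap.ker Ψ : Submodule ℂ L) := by
    rw [Submodule.span_le]
    rintro _ ⟨i, rfl⟩
    exact hwmem i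
  have hyns : y ∉ Submodule.span ℂ (Set.range w) := by
    intro h
    have := (hkerp y (hspanw h)).2
    rw [hψy] at this
    exact one_ne_zero this
  have hli1 : LinearIndependent ℂ (Fin.cons y w : Fin (m + 2) → L) := hwli.fin_cons hyns
  have hxns : x ∉ Submodule.span ℂ (Set.range (Fin.cons y w : Fin (m + 2) → L)) := by
    intro h
    have hle : Submodule.span ℂ (Set.range (Fin.cons y w : Fin (m + 2) → L)) ≤
        LinearMap.ker φ := by
      rw [Submodule.span_le, Fin.range_cons]
      rintro _ (rfl | ⟨i, rfl⟩)
      · exact hφy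
      · exact (hkerp _ (hwmem _)).1
    have : Bc x y = 0 := hle h
    rw [hψy] at this
    exact one_ne_zero this
  have hli : LinearIndependent ℂ v := hli1.fin_cons hxns
  have hcard : Fintype.card (Fin (m + 3)) = finrank ℂ L := by
    rw [hdim]; simp
  let b : Basis (Fin (m + 3)) ℂ L := basisOfLinearIndependentOfCardEqFinrank hli hcard
  have hb : ⇑b = v := coe_basisOfLinearIndependentOfCardEqFinrank hli hcard
  refine ⟨b, ?_, ?_⟩
  · rw [hb, hv0, hv1, hxy]
  · intro i j hij hji
    rw [hb]
    have hcase : ∀ k : Fin (m + 3), k = 0 ∨ k = 1 ∨ 2 ≤ (k : ℕ) := by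
      intro k
      rcases Nat.lt_or_ge (k : ℕ) 2 with h | h
      · interval_cases hk : (k : ℕ)
        · left; exact Fin.ext (by simp [hk])
        · right; left; exact Fin.ext (by simp [hk])
      · right; right; exact h
    rcases hcase i with hi | hi | hi <;> rcases hcase j with hj | hj | hj
    · subst hi; subst hj; rw [hv0, lie_self]
    · exact absurd ⟨hi, hj⟩ hij
    · subst hi; rw [hv0]; exact hxw _ (hv2 j hj)
    · exact absurd ⟨hi, hj⟩ hji
    · subst hi; subst hj; rw [hv1, lie_self]
    · subst hi; rw [hv1, ← lie_skew, hwy _ (hv2 j hj), neg_zero]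
    · subst hj; rw [hv0, ← lie_skew, hxw _ (hv2 i hi), neg_zero]
    · subst hj; rw [hv1]; exact hwy _ (hv2 i hi)
    · exact hww _ (hv2 i hi) _ (hv2 j hj)
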